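/- For the generic monic polynomial f of degree n over A (with algebraically independent coefficients f_1,...,f_n), the universal roots τ_1,...,τ_n of f in the splitting algebra A[f_1,...,f_n]_f are algebraically independent over A. -/

import Mathlib

open MvPolynomial Polynomial

/-- The ideal `(s₁ - f₁, ..., sₙ - fₙ)` defining the splitting algebra, where
`fᵢ = (-1)^i · coeff f (n - i)` are the signed coefficients of `f`. -/
noncomputable def splittingIdeal (A : Type*) [CommRing A] (f : Polynomial A) (n : ℕ) :
    Ideal (MvPolynomial (Fin n) A) :=
  Ideal.span (Set.range fun i : Fin n =>
    esymm (Fin n) A ((i : ℕ) + 1) -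
      MvPolynomial.C ((-1 : A) ^ ((i : ℕ) + 1) * f.coeff (n - ((i : ℕ) + 1))))

/-- The splitting algebra `A_f = A[t₁,...,tₙ]/(s₁ - f₁, ..., sₙ - fₙ)`. -/
noncomputable def SplittingAlgebra (A : Type*) [CommRing A] (f : Polynomial A) (n : ℕ) :=
  MvPolynomial (Fin n) A ⧸ splittingIdeal A f n

noncomputable instance (A : Type*) [CommRing A] (f : Polynomial A) (n : ℕ) :
    CommRing (SplittingAlgebra A f n) := Ideal.Quotient.commRing _

noncomputable instance (R A : Type*) [CommSemiring R] [CommRing A] [Algebra R A]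
    (f : Polynomial A) (n : ℕ) : Algebra R (SplittingAlgebra A f n) :=
  Ideal.Quotient.algebra R

/-- The universal roots `τᵢ` of `f` in the splitting algebra. -/
noncomputable def univRoot (A : Type*) [CommRing A] (f : Polynomial A) (n : ℕ) (i : Fin n) :
    SplittingAlgebra A f n :=
  Ideal.Quotient.mk (splittingIdeal A f n) (MvPolynomial.X i)

/-- The action of a permutation `σ` on the splitting algebra, sending `τᵢ` to `τ_{σ⁻¹ i}`. -/
noncomputable def permHom (A : Type*) [CommRing A] (f : Polynomial A) (n : ℕ)
    (σ : Equiv.Perm (Fin n)) : SplittingAlgebra A f n →ₐ[A] SplittingAlgebra A f n :=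
  Ideal.Quotient.liftₐ (splittingIdeal A f n)
    ((Ideal.Quotient.mkₐ A (splittingIdeal A f n)).comp
      (rename (σ.symm : Fin n → Fin n)))
    (by
      intro a ha
      have h : splittingIdeal A f n ≤ RingHom.ker
          ((Ideal.Quotient.mkₐ A (splittingIdeal A f n)).comp
            (rename (σ.symm : Fin n → Fin n))) := by
        rw [splittingIdeal, Ideal.span_le]
        rintro _ ⟨i, rfl⟩
        have : (rename (σ.symm : Fin n → Fin n))
            (esymm (Fin n) A ((i : ℕ) + 1) -
              MvPolynomial.C ((-1 : A) ^ ((i : ℕ) + 1) * f.coeff (n - ((i : ℕ) + 1)))) =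
            esymm (Fin n) A ((i : ℕ) + 1) -
              MvPolynomial.C ((-1 : A) ^ ((i : ℕ) + 1) * f.coeff (n - ((i : ℕ) + 1))) := by
          rw [map_sub, rename_esymm, rename_C]
        simp only [SetLike.mem_coe, RingHom.mem_ker, AlgHom.coe_comp, Function.comp_apply, this]
        rw [Ideal.Quotient.mkₐ_eq_mk, Ideal.Quotient.eq_zero_iff_mem]
        exact Ideal.subset_span ⟨i, rfl⟩
      exact h ha)


theorem generic_univRoots_algebraicIndependent (A : Type*) [CommRing A] (n : ℕ) :
    AlgebraicIndependent A
      (fun i : Fin n => univRoot (MvPolynomial (Fin n) A) (Polynomial.X ^ n + ∑ i : Fin n, Polynomial.C ((-1 : MvPolynomial (Fin n) A) ^ ((i : ℕ) + 1) * MvPolynomial.X i) * Polynomial.X ^ (n - ((i : ℕ) + 1))) n i) := by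
  classical
  set B := MvPolynomial (Fin n) A with hB
  set f : Polynomial B := Polynomial.X ^ n + ∑ i : Fin n,
    Polynomial.C ((-1 : B) ^ ((i : ℕ) + 1) * MvPolynomial.X i) * Polynomial.X ^ (n - ((i : ℕ) + 1)) with hf
  have hcoeff : ∀ i : Fin n, (-1 : B) ^ ((i : ℕ) + 1) * f.coeff (n - ((i : ℕ) + 1)) = MvPolynomial.X i := by
    intro i
    have hi := i.2
    have h1 : f.coeff (n - ((i : ℕ) + 1)) = (-1 : B) ^ ((i : ℕ) + 1) * MvPolynomial.X i := by
      rw [hf]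
      rw [Polynomial.coeff_add, Polynomial.coeff_X_pow, Polynomial.finset_sum_coeff]
      have hne : ¬ (n - ((i:ℕ)+1) = n) := by omega
      rw [if_neg hne, zero_add]
      rw [Finset.sum_eq_single i]
      · simp only [Polynomial.coeff_C_mul, Polynomial.coeff_X_pow, if_pos rfl, mul_one]
        simp
      · intro j _ hj
        have : ¬ (n - ((i:ℕ)+1) = n - ((j:ℕ)+1)) := by
          have := j.2
          intro h
          exact hj (Fin.ext (by omega)).symm
        simp only [Polynomial.coeff_C_mul, Polynomial.coeff_X_pow, if_neg this, mul_zero]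
      · intro h; exact absurd (Finset.mem_univ i) h
    rw [h1, ← mul_assoc, ← pow_add]
    simp [pow_mul, mul_two]
  -- the retraction
  set g : B →ₐ[A] MvPolynomial (Fin n) A :=
    aeval (fun j : Fin n => esymm (Fin n) A ((j : ℕ) + 1)) with hg
  set ψ : MvPolynomial (Fin n) B →ₐ[A] MvPolynomial (Fin n) A :=
    aevalTower g MvPolynomial.X with hψ
  have hψesymm : ∀ k : ℕ, ψ (esymm (Fin n) B k) = esymm (Fin n) A k := by
    intro k
    simp [MvPolynomial.esymm, map_sum, map_prod, hψ]
  have hker : ∀ a ∈ splittingIdeal B f n, ψ a = 0 := by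
    intro a ha
    have h : splittingIdeal B f n ≤ RingHom.ker ψ := by
      rw [splittingIdeal, Ideal.span_le]
      rintro _ ⟨i, rfl⟩
      simp only [SetLike.mem_coe, RingHom.mem_ker, map_sub, hψesymm]
      rw [show (MvPolynomial.C ((-1 : B) ^ ((i:ℕ) + 1) * f.coeff (n - ((i:ℕ) + 1)))
            : MvPolynomial (Fin n) B) = MvPolynomial.C (MvPolynomial.X i) by rw [hcoeff i]]
      rw [hψ, MvPolynomial.aevalTower_C, hg, MvPolynomial.aeval_X, sub_self]
    exact h ha
  set φ : SplittingAlgebra B f n →ₐ[A] MvPolynomial (Fin n) A :=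
    Ideal.Quotient.liftₐ (splittingIdeal B f n) ψ hker with hφ
  have key : φ.comp (aeval fun i : Fin n => univRoot B f n i) = AlgHom.id A _ := by
    apply MvPolynomial.algHom_ext
    intro i
    simp only [AlgHom.coe_comp, Function.comp_apply, MvPolynomial.aeval_X, AlgHom.id_apply]
    show (Ideal.Quotient.liftₐ (splittingIdeal B f n) ψ hker)
      (Ideal.Quotient.mk (splittingIdeal B f n) (MvPolynomial.X i)) = MvPolynomial.X i
    rw [Ideal.Quotient.liftₐ_apply]
    erw [Ideal.Quotient.lift_mk]
    rw [hψ]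
    simp
  rw [algebraicIndependent_iff_injective_aeval]
  intro x y hxy
  have h2 := congrArg φ hxy
  rwa [← AlgHom.comp_apply, ← AlgHom.comp_apply, key, AlgHom.id_apply, AlgHom.id_apply] at h2
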